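/- For every a ≥ 1 and b ≥ 0 one has a·b ≤ H(a) + H*(b), where H(a) = (1/4)·a·(log a)^2 and H*(b) = (1/2)·e^{-1+√(1+4b)}·(-1+√(1+4b)). -/
import Mathlib


/-- For every `a ≥ 1` and `b ≥ 0`,
`a·b ≤ H(a) + H*(b)` where `H(a) = (1/4)a(log a)²` and
`H*(b) = (1/2)e^{-1+√(1+4b)}(-1+√(1+4b))`. -/
theorem stmt3 (a b : ℝ) (ha : 1 ≤ a) (hb : 0 ≤ b) :
    a * b ≤ (1 / 4) * a * (Real.log a) ^ 2
      + (1 / 2) * Real.exp (-1 + Real.sqrt (1 + 4 * b))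
        * (-1 + Real.sqrt (1 + 4 * b)) := by
  set s : ℝ := -1 + Real.sqrt (1 + 4 * b) with hs
  have hsq1 : (1:ℝ) ≤ Real.sqrt (1 + 4 * b) := by
    have : Real.sqrt 1 ≤ Real.sqrt (1 + 4 * b) := Real.sqrt_le_sqrt (by linarith)
    simpa using this
  have hs0 : 0 ≤ s := by simp only [hs]; linarith
  have hbeq : b = (s ^ 2 + 2 * s) / 4 := by
    have h := Real.sq_sqrt (by linarith : (0:ℝ) ≤ 1 + 4 * b)
    simp only [hs]
    nlinarith [h]
  set t : ℝ := Real.log a with ht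
  have ht0 : 0 ≤ t := Real.log_nonneg ha
  have hat : a = Real.exp t := (Real.exp_log (by linarith)).symm
  -- key: e^u (1-u) ≤ 1 with u = t - s
  have key : Real.exp (t - s) * (1 - (t - s)) ≤ 1 := by
    have h1 : 1 + -(t - s) ≤ Real.exp (-(t - s)) := by
      linarith [Real.add_one_le_exp (-(t - s))]
    have h2 : (0:ℝ) < Real.exp (t - s) := Real.exp_pos _
    have h3 : Real.exp (t - s) * Real.exp (-(t - s)) = 1 := by
      rw [← Real.exp_add]; simp
    nlinarith [h1, h2, h3]
  have hsplit : Real.exp t = Real.exp (t - s) * Real.exp s := by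
    rw [← Real.exp_add]; ring_nf
  have key2 : 2 * s * (Real.exp t * (1 - t + s)) ≤ 2 * s * Real.exp s := by
    have hes : (0:ℝ) < Real.exp s := Real.exp_pos _
    have h4 : Real.exp t * (1 - t + s) = Real.exp s * (Real.exp (t - s) * (1 - (t - s))) := by
      rw [hsplit]; ring
    rw [h4]
    have := mul_le_mul_of_nonneg_left key (le_of_lt hes)
    nlinarith [this, hs0]
  clear_value s t
  rw [hat, hbeq]
  have hpos : (0:ℝ) < Real.exp t := Real.exp_pos _
  nlinarith [key2, mul_nonneg (le_of_lt hpos) (sq_nonneg (t - s)), sq_nonneg (t - s)]
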